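/- Let s ≥ 2 and let ω be a (2s−1)-th root of unity with ω ≠ 1. If p ≡ 2 (mod 2(2s−1)), then (ω^s − ω)^p = ω(ω^s − 1)^p. -/
import Mathlib


/-- Let `s ≥ 2` and `ω` a `(2s−1)`-th root of unity with `ω ≠ 1`. If
`p ≡ 2 (mod 2(2s−1))` then `(ω^s − ω)^p = ω(ω^s − 1)^p`. -/
theorem theta_root_sufficiency (s : ℕ) (hs : 2 ≤ s) (ω : ℂ)
    (hω : ω ^ (2 * s - 1) = 1) (hω1 : ω ≠ 1) (p : ℕ)
    (hp : p % (2 * (2 * s - 1)) = 2) :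
    (ω ^ s - ω) ^ p = ω * (ω ^ s - 1) ^ p := by
  set m := 2 * s - 1 with hmdef
  have hsq : (ω ^ s) ^ 2 = ω := by
    have : ω ^ (2 * s) = ω := by
      have h2s : 2 * s = m + 1 := by omega
      rw [h2s, pow_succ, hω, one_mul]
    rw [← pow_mul, mul_comm, this]
  have base : (ω ^ s - ω) ^ 2 = ω * (ω ^ s - 1) ^ 2 := by
    linear_combination (1 - ω) * hsq
  have hdm := Nat.div_add_mod p (2 * m)
  obtain ⟨k, hk⟩ : ∃ k, p = 2 * m * k + 2 := ⟨p / (2 * m), by omega⟩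
  subst hk
  have key : (ω ^ s - ω) ^ (2 * m * k) = (ω ^ s - 1) ^ (2 * m * k) := by
    rw [pow_mul, pow_mul, pow_mul, pow_mul, base, mul_pow, hω, one_mul]
  rw [pow_add, pow_add, key, base]
  ring
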